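/- The class 𝓛 = {ℕ \ {0}} ∪ {D ∪ {0} | D finite ⊆ ℕ} is learnable by a set-driven learner: there is a (computable) function h from finite subsets of ℕ to hypotheses, and a hypothesis space, such that for every L ∈ 𝓛 and every text T for L, the sequence n ↦ h(content(T[n])) converges syntactically to a hypothesis denoting L. -/

import Mathlib

/-- The content of a text `T : ℕ → Option ℕ` (with `none` as the pause symbol `#`). -/
def content (T : ℕ → Option ℕ) : Set ℕ := {x | ∃ n, T n = some x}

/-- The (finite) content of the length-`n` initial segment `T[n]` of a text. -/
def finContentUpTo (T : ℕ → Option ℕ) (n : ℕ) : Finset ℕ :=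
  (Finset.range n).biUnion fun i => (T i).toFinset

/-- The class `𝓛 = {ℕ \ {0}} ∪ {D ∪ {0} | D ⊆ ℕ finite}`. -/
def theClass : Set (Set ℕ) :=
  insert {n : ℕ | n ≠ 0} {S : Set ℕ | ∃ D : Finset ℕ, S = ↑D ∪ {0}}

lemma mem_bitIndices_iff : ∀ (n y : ℕ), y ∈ Nat.bitIndices n ↔ Nat.testBit n y := by
  intro n
  induction n using Nat.strong_induction_on with
  | _ n ih =>
    intro y
    rcases Nat.eq_zero_or_pos n with rfl | hn
    · simp
    have h2 : n / 2 < n := Nat.div_lt_self hn (by norm_num)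
    have hsplit : n = 2 * (n / 2) + n % 2 := (Nat.div_add_mod n 2).symm ▸ by omega
    rcases Nat.even_or_odd n with he | ho
    · have hmod : n % 2 = 0 := Nat.even_iff.mp he
      have hrw : n = 2 * (n / 2) := by omega
      rw [hrw, Nat.bitIndices_two_mul]
      cases y with
      | zero =>
        simp only [Nat.testBit_zero]
        constructor
        · intro hy; simp at hy
        · intro hy; rw [← hrw, hmod] at hy; simp at hy
      | succ y =>
        rw [Nat.testBit_succ, ← hrw]
        have hd : (2 * (n / 2)) / 2 = n / 2 := by omega
        rw [hrw, hd]
        constructor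
        · intro hy
          obtain ⟨z, hz, hz'⟩ := List.mem_map.mp hy
          have : z = y := by omega
          subst this
          exact (ih _ h2 _).mp hz
        · intro hy
          exact List.mem_map.mpr ⟨y, (ih _ h2 y).mpr hy, rfl⟩
    · have hmod : n % 2 = 1 := Nat.odd_iff.mp ho
      have hrw : n = 2 * (n / 2) + 1 := by omega
      rw [hrw, Nat.bitIndices_two_mul_add_one]
      cases y with
      | zero =>
        simp only [Nat.testBit_zero, ← hrw, hmod]
        simp
      | succ y =>
        rw [Nat.testBit_succ, ← hrw]
        have hd : n / 2 = n / 2 := rfl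
        constructor
        · intro hy
          rcases List.mem_cons.mp hy with h0 | hy
          · omega
          obtain ⟨z, hz, hz'⟩ := List.mem_map.mp hy
          have : z = y := by omega
          subst this
          exact (ih _ h2 _).mp hz
        · intro hy
          exact List.mem_cons.mpr (Or.inr (List.mem_map.mpr ⟨y, (ih _ h2 y).mpr hy, rfl⟩))

lemma testBit_sum_two_pow (E : Finset ℕ) (y : ℕ) :
    Nat.testBit (∑ x ∈ E, 2 ^ x) y = true ↔ y ∈ E := by
  rw [← mem_bitIndices_iff, ← List.mem_toFinset, Finset.toFinset_bitIndices_twoPowSum]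

/-- The learner: if `0` is in the data, output the canonical code of the data (+1);
otherwise conjecture `ℕ \ {0}` (hypothesis `0`). -/
noncomputable def theLearner (D : Finset ℕ) : ℕ :=
  if 0 ∈ D then (∑ x ∈ D, 2 ^ x) + 1 else 0

/-- The hypothesis space. -/
def theSpace (i : ℕ) : Set ℕ :=
  if i = 0 then {x | x ≠ 0} else {x | Nat.testBit (i - 1) x = true}

lemma pow2_primrec : Primrec (fun x : ℕ => 2 ^ x) :=
  (Primrec₂.unpaired'.1 Nat.Primrec.pow).comp (Primrec.const 2) Primrec.id

/-- The list-form learner. -/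
def theListLearner (l : List ℕ) : ℕ :=
  if l.head? = some 0 then (l.foldr (fun b s => 2 ^ b + s) 0) + 1 else 0

lemma theListLearner_primrec : Primrec theListLearner := by
  have hfold : Primrec (fun l : List ℕ => l.foldr (fun b s => 2 ^ b + s) 0) := by
    have := Primrec.list_foldr (α := List ℕ) (β := ℕ) (σ := ℕ)
      (f := id) (g := fun _ => 0) (h := fun _ p => 2 ^ p.1 + p.2)
      Primrec.id (Primrec.const 0)
      (Primrec.nat_add.comp (pow2_primrec.comp (Primrec.fst.comp Primrec.snd))
        (Primrec.snd.comp Primrec.snd)).to₂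
    exact this
  have hcond : PrimrecPred (fun l : List ℕ => l.head? = some 0) :=
    Primrec.eq.comp Primrec.list_head? (Primrec.const (some 0))
  exact Primrec.ite hcond (Primrec.succ.comp hfold) (Primrec.const 0)

lemma foldr_eq_sum (l : List ℕ) :
    l.foldr (fun b s => 2 ^ b + s) 0 = (l.map (fun x => 2 ^ x)).sum := by
  induction l with
  | nil => rfl
  | cons a l ih => simp [ih]

lemma theLearner_eq (D : Finset ℕ) :
    theLearner D = theListLearner (D.sort (· ≤ ·)) := by
  unfold theLearner theListLearner
  have hmem : (D.sort (· ≤ ·)).head? = some 0 ↔ 0 ∈ D := by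
    constructor
    · intro h
      have : 0 ∈ D.sort (· ≤ ·) := by
        cases hl : (D.sort (· ≤ ·)) with
        | nil => rw [hl] at h; simp at h
        | cons a l => rw [hl] at h; simp at h; simp [hl, h]
      exact (Finset.mem_sort _).mp this
    · intro h
      have h0 : 0 ∈ D.sort (· ≤ ·) := (Finset.mem_sort _).mpr h
      cases hl : (D.sort (· ≤ ·)) with
      | nil => rw [hl] at h0; simp at h0
      | cons a l =>
        have hsorted : (D.sort (· ≤ ·)).Pairwise (· ≤ ·) := Finset.pairwise_sort _ _
        rw [hl] at h0 hsorted
        rcases List.mem_cons.mp h0 with rfl | h0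
        · simp
        · have := (List.pairwise_cons.mp hsorted).1 0 h0
          simp [Nat.le_zero.mp this]
  have hsum : ((D.sort (· ≤ ·)).foldr (fun b s => 2 ^ b + s) 0) = ∑ x ∈ D, 2 ^ x := by
    rw [foldr_eq_sum]
    have hperm : (D.sort (· ≤ ·)).Perm D.toList := Finset.sort_perm_toList _ _
    rw [(hperm.map _).sum_eq, Finset.sum_map_toList]
  rw [hsum]
  by_cases h : 0 ∈ D
  · rw [if_pos h, if_pos (hmem.mpr h)]
  · rw [if_neg h, if_neg (fun hc => h (hmem.mp hc))]

/-- The decision procedure for the hypothesis space. -/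
def theDec (i x : ℕ) : Bool :=
  if i = 0 then decide (x ≠ 0) else decide ((i - 1) / 2 ^ x % 2 = 1)

lemma theDec_primrec : Primrec₂ theDec := by
  have h1 : PrimrecPred (fun p : ℕ × ℕ => p.1 = 0) :=
    Primrec.eq.comp Primrec.fst (Primrec.const 0)
  have h2 : Primrec (fun p : ℕ × ℕ => decide (p.2 ≠ 0)) := by
    have : PrimrecPred (fun p : ℕ × ℕ => p.2 ≠ 0) :=
      PrimrecPred.not (Primrec.eq.comp Primrec.snd (Primrec.const 0))
    exact this.decide
  have h3 : Primrec (fun p : ℕ × ℕ => decide ((p.1 - 1) / 2 ^ p.2 % 2 = 1)) := by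
    have hval : Primrec (fun p : ℕ × ℕ => (p.1 - 1) / 2 ^ p.2 % 2) :=
      Primrec.nat_mod.comp
        (Primrec.nat_div.comp
          (Primrec.nat_sub.comp Primrec.fst (Primrec.const 1))
          (pow2_primrec.comp Primrec.snd))
        (Primrec.const 2)
    have : PrimrecPred (fun p : ℕ × ℕ => (p.1 - 1) / 2 ^ p.2 % 2 = 1) :=
      Primrec.eq.comp hval (Primrec.const 1)
    exact this.decide
  exact (Primrec.ite h1 h2 h3).to₂

lemma theDec_correct (i x : ℕ) : x ∈ theSpace i ↔ theDec i x = true := by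
  unfold theSpace theDec
  by_cases hi : i = 0
  · simp [hi]
  · simp only [if_neg hi, Set.mem_setOf_eq]
    rw [Nat.testBit_eq_decide_div_mod_eq]

lemma finContentUpTo_subset_content (T : ℕ → Option ℕ) (n : ℕ) (x : ℕ)
    (hx : x ∈ finContentUpTo T n) : x ∈ content T := by
  simp only [finContentUpTo, Finset.mem_biUnion, Finset.mem_range, Option.mem_toFinset] at hx
  obtain ⟨i, _, hi⟩ := hx
  exact ⟨i, hi⟩

/-- The class `𝓛` is Ex-learnable by a computable set-driven learner with respect to
some hypothesis space with decidable membership. -/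
theorem setdriven_learner_for_class :
    ∃ (h : Finset ℕ → ℕ) (H : ℕ → Set ℕ),
      (∃ f : List ℕ → ℕ, Computable f ∧ ∀ D : Finset ℕ, h D = f (D.sort (· ≤ ·))) ∧
      (∃ dec : ℕ → ℕ → Bool, Computable₂ dec ∧ ∀ i x, x ∈ H i ↔ dec i x = true) ∧
      ∀ L ∈ theClass, ∀ T : ℕ → Option ℕ, content T = L →
        ∃ n₀, ∀ n ≥ n₀,
          h (finContentUpTo T n) = h (finContentUpTo T n₀) ∧
          H (h (finContentUpTo T n₀)) = L := by
  refine ⟨theLearner, theSpace, ⟨theListLearner, theListLearner_primrec.to_comp,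
    theLearner_eq⟩, ⟨theDec, theDec_primrec.to_comp, theDec_correct⟩, ?_⟩
  intro L hL T hT
  rcases hL with hL | ⟨D, rfl⟩
  · -- L = ℕ \ {0}
    subst hL
    have hzero : ∀ n, 0 ∉ finContentUpTo T n := by
      intro n hn
      have := finContentUpTo_subset_content T n 0 hn
      rw [hT] at this
      exact this rfl
    refine ⟨0, fun n _ => ?_⟩
    have h1 : theLearner (finContentUpTo T n) = 0 := by
      simp [theLearner, hzero n]
    have h0 : theLearner (finContentUpTo T 0) = 0 := by
      simp [theLearner, hzero 0]
    refine ⟨by rw [h1, h0], ?_⟩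
    rw [h0]
    simp [theSpace]
  · -- L = ↑D ∪ {0}
    set E : Finset ℕ := insert 0 D with hE
    have hcE : content T = ↑E := by
      rw [hT, hE]
      push_cast
      rw [Set.union_comm]
      rfl
    -- every element of E appears in T at some point
    have happ : ∀ x ∈ E, ∃ n, T n = some x := by
      intro x hx
      have : x ∈ content T := by rw [hcE]; exact_mod_cast hx
      exact this
    classical
    set N : ℕ := E.sup (fun x => if hx : ∃ n, T n = some x then Nat.find hx + 1 else 0) with hN
    have hfull : ∀ n ≥ N, finContentUpTo T n = E := by
      intro n hn
      apply Finset.Subset.antisymm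
      · intro x hx
        have := finContentUpTo_subset_content T n x hx
        rw [hcE] at this
        exact_mod_cast this
      · intro x hx
        have hex : ∃ m, T m = some x := happ x hx
        have hle : Nat.find hex + 1 ≤ N := by
          have h := Finset.le_sup (f := fun x => if hx : ∃ n, T n = some x then Nat.find hx + 1 else 0) hx
          beta_reduce at h
          rwa [dif_pos hex] at h
        simp only [finContentUpTo, Finset.mem_biUnion, Finset.mem_range, Option.mem_toFinset]
        exact ⟨Nat.find hex, by omega, Nat.find_spec hex⟩
    refine ⟨N, fun n hn => ?_⟩
    rw [hfull n hn, hfull N (le_refl N)]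
    refine ⟨rfl, ?_⟩
    have h0E : 0 ∈ E := Finset.mem_insert_self 0 D
    have hval : theLearner E = (∑ x ∈ E, 2 ^ x) + 1 := by simp [theLearner, h0E]
    rw [hval]
    have hsp : theSpace ((∑ x ∈ E, 2 ^ x) + 1) = {x | Nat.testBit (∑ x ∈ E, 2 ^ x) x = true} := by
      simp [theSpace]
    rw [hsp]
    ext y
    simp only [Set.mem_setOf_eq]
    rw [testBit_sum_two_pow]
    constructor
    · intro hy
      rw [hE] at hy
      rcases Finset.mem_insert.mp hy with rfl | hy
      · exact Or.inr rfl
      · exact Or.inl (Finset.mem_coe.mpr hy)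
    · intro hy
      rw [hE]
      rcases hy with hy | hy
      · exact Finset.mem_insert_of_mem (Finset.mem_coe.mp hy)
      · exact Finset.mem_insert.mpr (Or.inl hy)
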